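/- Let α = 0.14 and τ = 4e^{−4α} − 1. Then τ > 0, and for all x > α, with ε = α/x one has ((1 + 1/√ε)/2)² · e^{4εx} ≤ 1 + x/(τα), and moreover 1/(τα) < 5.56. -/

import Mathlib

lemma exp_056_lt : Real.exp 0.56 < 3892/2223 := by
  have h := Real.exp_bound' (x := 0.56) (by norm_num) (by norm_num) (n := 7) (by norm_num)
  calc Real.exp 0.56 ≤ _ := h
    _ < 3892/2223 := by
        simp [Finset.sum_range_succ, Nat.factorial]
        norm_num

theorem case_two_estimate :
    0 < 4 * Real.exp (-(4 * 0.14)) - 1 ∧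
    (∀ x : ℝ, 0.14 < x →
      ((1 + 1 / Real.sqrt (0.14 / x)) / 2) ^ 2 * Real.exp (4 * (0.14 / x) * x)
        ≤ 1 + x / ((4 * Real.exp (-(4 * 0.14)) - 1) * 0.14)) ∧
    1 / ((4 * Real.exp (-(4 * 0.14)) - 1) * 0.14) < 5.56 := by
  have hE : Real.exp (-(4 * 0.14)) = (Real.exp 0.56)⁻¹ := by
    rw [Real.exp_neg]; norm_num
  set e := Real.exp 0.56 with he
  have hepos : 0 < e := Real.exp_pos _
  have hinv : e * e⁻¹ = 1 := mul_inv_cancel₀ (ne_of_gt hepos)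
  have hub : e < 3892/2223 := exp_056_lt
  have he1 : 1 < e := by
    have := Real.add_one_le_exp (0.56:ℝ)
    rw [he]; linarith
  have hτ : 0 < 4 * Real.exp (-(4 * 0.14)) - 1 := by
    rw [hE]
    nlinarith [hinv, hepos]
  refine ⟨hτ, ?_, ?_⟩
  · intro x hx
    have hx0 : (0:ℝ) < x := lt_trans (by norm_num) hx
    have hεx : 4 * (0.14/x) * x = 0.56 := by field_simp; norm_num
    rw [hεx, ← he]
    set τ := 4 * Real.exp (-(4 * 0.14)) - 1 with hτdef
    have heτ : e * (τ + 1) = 4 := by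
      rw [hτdef, hE]; ring_nf; nlinarith [hinv]
    set u := Real.sqrt (0.14/x) with hu
    have hupos : 0 < u := Real.sqrt_pos.2 (by positivity)
    have hu2 : u^2 = 0.14/x := Real.sq_sqrt (by positivity)
    set t := 1/u with ht
    have htpos : 0 < t := by positivity
    have hxt : x = 0.14 * t^2 := by
      rw [ht]
      field_simp
      field_simp at hu2
      nlinarith [hu2]
    have hden : 0 < τ * 0.14 := by positivity
    rw [← sub_nonneg]
    have key : 1 + x / (τ * 0.14) - ((1 + t)/2)^2 * e
        = (τ * 0.14 + x - ((1 + t)/2)^2 * e * (τ * 0.14)) / (τ * 0.14) := by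
      field_simp
    rw [key]
    apply div_nonneg _ (le_of_lt hden)
    rw [hxt]
    have hτ1 : (0:ℝ) < τ + 1 := by linarith
    have hev : e = 4/(τ+1) := by
      field_simp
      linarith [heτ]
    rw [hev]
    have hiden : τ * 0.14 + 0.14 * t^2 - ((1 + t)/2)^2 * (4/(τ+1)) * (τ * 0.14)
        = 0.14 * (t - τ)^2 / (τ + 1) := by
      field_simp
      ring
    rw [hiden]
    positivity
  · rw [hE]
    rw [div_lt_iff₀ (by rw [← hE]; positivity)]
    nlinarith [hinv, hepos]
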